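/- Let X = ℓ_1^n (ℝ^n with the ℓ_1 norm) and Y = {x ∈ ℝ^n : x_i = 0 for 1 ≤ i ≤ n−k}, a k-dimensional coordinate subspace (1 ≤ k ≤ n−1). Then λ(Y,X) = 1 and the affine dimension of the set of minimal projections from X onto Y equals k(n−k). -/

import Mathlib

open Metric Module

noncomputable section

abbrev EE (n : ℕ) := PiLp 1 fun _ : Fin n => ℝ

lemma l1_norm {n : ℕ} (x : EE n) : ‖x‖ = ∑ l, |x l| := by
  rw [PiLp.norm_eq_sum (by norm_num)]
  simp [Real.norm_eq_abs]


def sing (n : ℕ) (j : Fin n) : EE n := WithLp.toLp 1 (fun l => if l = j then (1:ℝ) else 0)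

lemma sing_apply {n : ℕ} (j l : Fin n) : sing n j l = if l = j then 1 else 0 := rfl

lemma norm_sing {n : ℕ} (j : Fin n) : ‖sing n j‖ = 1 := by
  rw [l1_norm]
  simp [sing_apply, apply_ite abs]

lemma sing_decomp {n : ℕ} (x : EE n) : x = ∑ l, x l • sing n l := by
  ext c
  rw [WithLp.ofLp_sum, Finset.sum_apply]
  simp [sing_apply]

lemma eq_on_basis {n : ℕ} (T S : EE n →L[ℝ] EE n) (h : ∀ l, T (sing n l) = S (sing n l)) :
    T = S := by
  refine ContinuousLinearMap.ext fun x => ?_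
  calc T x = T (∑ l, x l • sing n l) := by rw [← sing_decomp]
    _ = ∑ l, x l • T (sing n l) := by rw [map_sum]; simp only [map_smul]
    _ = ∑ l, x l • S (sing n l) := by simp only [h]
    _ = S (∑ l, x l • sing n l) := by rw [map_sum]; simp only [map_smul]
    _ = S x := by rw [← sing_decomp]

def P0lin (n m : ℕ) : EE n →ₗ[ℝ] EE n where
  toFun x := WithLp.toLp 1 (fun l => if (l : ℕ) < m then 0 else x l)
  map_add' x y := by ext l; by_cases h : (l:ℕ) < m <;> simp [h]
  map_smul' c x := by ext l; by_cases h : (l:ℕ) < m <;> simp [h]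

def P0 (n m : ℕ) : EE n →L[ℝ] EE n := LinearMap.toContinuousLinearMap (P0lin n m)

lemma P0_apply {n m : ℕ} (x : EE n) (l : Fin n) :
    P0 n m x l = if (l : ℕ) < m then 0 else x l := rfl

def Dlin (n : ℕ) (i j : Fin n) : EE n →ₗ[ℝ] EE n where
  toFun x := WithLp.toLp 1 (fun l => if l = j then x i else 0)
  map_add' x y := by ext l; by_cases h : l = j <;> simp [h]
  map_smul' c x := by ext l; by_cases h : l = j <;> simp [h]

def Dc (n : ℕ) (i j : Fin n) : EE n →L[ℝ] EE n := LinearMap.toContinuousLinearMap (Dlin n i j)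

lemma Dc_apply {n : ℕ} (i j : Fin n) (x : EE n) (l : Fin n) :
    Dc n i j x l = if l = j then x i else 0 := rfl

lemma norm_P0_apply_le {n m : ℕ} (x : EE n) : ‖P0 n m x‖ ≤ ‖x‖ := by
  rw [l1_norm, l1_norm]
  refine Finset.sum_le_sum fun l _ => ?_
  rw [P0_apply]
  split <;> simp [abs_nonneg]

lemma norm_P0_add_Dc_apply_le {n m : ℕ} {i j : Fin n} (hi : (i:ℕ) < m) (hj : m ≤ (j:ℕ))
    (x : EE n) : ‖(P0 n m + Dc n i j) x‖ ≤ ‖x‖ := by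
  rw [l1_norm, l1_norm]
  have step1 : ∀ l, |(P0 n m + Dc n i j) x l| ≤ |P0 n m x l| + |Dc n i j x l| := by
    intro l
    have : (P0 n m + Dc n i j) x l = P0 n m x l + Dc n i j x l := rfl
    rw [this]; exact abs_add_le _ _
  calc ∑ l, |(P0 n m + Dc n i j) x l|
      ≤ ∑ l, (|P0 n m x l| + |Dc n i j x l|) := Finset.sum_le_sum fun l _ => step1 l
    _ = (∑ l, |P0 n m x l|) + ∑ l, |Dc n i j x l| := Finset.sum_add_distrib
    _ = (∑ l, |P0 n m x l|) + |x i| := by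
        congr 1
        simp only [Dc_apply, apply_ite abs, abs_zero]
        rw [Finset.sum_ite_eq' Finset.univ j (fun _ => |x i|)]
        simp
    _ ≤ (∑ l, |P0 n m x l|) + ∑ l : Fin n, if (l:ℕ) < m then |x l| else 0 := by
        gcongr
        refine Finset.single_le_sum (f := fun l : Fin n => if (l:ℕ) < m then |x l| else 0)
          (fun l _ => by dsimp only; split <;> simp [abs_nonneg]) (Finset.mem_univ i) |>.trans_eq' ?_
        simp [hi]
    _ = ∑ l, |x l| := by
        rw [← Finset.sum_add_distrib]
        refine Finset.sum_congr rfl fun l _ => ?_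
        rw [P0_apply]
        by_cases h : (l:ℕ) < m <;> simp [h]


variable {X : Type*} [NormedAddCommGroup X] [NormedSpace ℝ X]

def IsProjOnto (Y : Submodule ℝ X) (P : X →L[ℝ] X) : Prop :=
  (∀ x, P x ∈ Y) ∧ ∀ y ∈ Y, P y = y

def relProjConst (Y : Submodule ℝ X) : ℝ :=
  sInf {c | ∃ P : X →L[ℝ] X, IsProjOnto Y P ∧ ‖P‖ = c}

def MinProjSet (Y : Submodule ℝ X) : Set (X →L[ℝ] X) :=
  {P | IsProjOnto Y P ∧ ‖P‖ = relProjConst Y}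

def adim {M : Type*} [AddCommGroup M] [Module ℝ M] (S : Set M) : ℕ :=
  finrank ℝ (affineSpan ℝ S).direction

/-- For `X = ℓ₁ⁿ` and the coordinate subspace
`Y = {x : x_i = 0 for the first n - k coordinates}` (with `1 ≤ k ≤ n - 1`), one has
`λ(Y, X) = 1` and the affine dimension of the set of minimal projections is `k(n-k)`. -/
theorem ell1_coordinate_subspace_adim {n k : ℕ} (hk1 : 1 ≤ k) (hkn : k ≤ n - 1)
    (Y : Submodule ℝ (PiLp 1 fun _ : Fin n => ℝ))
    (hY : ∀ x : PiLp 1 fun _ : Fin n => ℝ,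
      x ∈ Y ↔ ∀ i : Fin n, (i : ℕ) < n - k → x i = 0) :
    relProjConst Y = 1 ∧ adim (MinProjSet Y) = k * (n - k) := by
  set m : ℕ := n - k with hm
  have hn2 : 2 ≤ n := by omega
  have hm1 : 1 ≤ m := by omega
  have hmlt : m < n := by omega
  have hmk : m + k = n := by omega
  have hmn : m ≤ n := le_of_lt hmlt
  have memY : ∀ x : EE n, x ∈ Y ↔ ∀ l : Fin n, (l : ℕ) < m → x l = 0 := hY
  -- projection facts
  have hP0proj : IsProjOnto Y (P0 n m) := by
    constructor
    · intro x
      rw [memY]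
      intro l hl
      rw [P0_apply, if_pos hl]
    · intro y hy
      ext l
      rw [P0_apply]
      by_cases h : (l : ℕ) < m
      · rw [if_pos h, (memY y).1 hy l h]
      · rw [if_neg h]
  -- the distinguished element of Y with norm 1
  set j0 : Fin n := ⟨n - 1, by omega⟩ with hj0
  have hy0Y : sing n j0 ∈ Y := by
    rw [memY]
    intro l hl
    have hne : l ≠ j0 := Fin.ne_of_val_ne (by simp [hj0]; omega)
    simp [sing_apply, hne]
  have norm_ge : ∀ P : EE n →L[ℝ] EE n, IsProjOnto Y P → 1 ≤ ‖P‖ := by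
    intro P hP
    have h1 : P (sing n j0) = sing n j0 := hP.2 _ hy0Y
    have h2 := P.le_opNorm (sing n j0)
    rw [h1, norm_sing] at h2
    linarith
  have hP0norm : ‖P0 n m‖ = 1 :=
    le_antisymm (P0 n m |>.opNorm_le_bound zero_le_one fun x => by
      rw [one_mul]; exact norm_P0_apply_le x) (norm_ge _ hP0proj)
  -- relProjConst = 1
  have hS1 : (1 : ℝ) ∈ {c | ∃ P : EE n →L[ℝ] EE n, IsProjOnto Y P ∧ ‖P‖ = c} :=
    ⟨P0 n m, hP0proj, hP0norm⟩
  have hlb : ∀ c ∈ {c | ∃ P : EE n →L[ℝ] EE n, IsProjOnto Y P ∧ ‖P‖ = c}, (1:ℝ) ≤ c := by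
    rintro c ⟨P, hP, rfl⟩
    exact norm_ge P hP
  have hrel : relProjConst Y = 1 := by
    unfold relProjConst
    exact le_antisymm (csInf_le ⟨1, hlb⟩ hS1) (le_csInf ⟨1, hS1⟩ hlb)
  refine ⟨hrel, ?_⟩
  -- the family of rank-one perturbations
  set emb : Fin m → Fin n := Fin.castLE hmn with hemb
  set jemb : Fin k → Fin n := fun b => ⟨m + (b : ℕ), by have := b.2; omega⟩ with hjemb
  have hembv : ∀ a : Fin m, ((emb a : Fin n) : ℕ) = (a : ℕ) := fun a => rfl
  have hjembv : ∀ b : Fin k, ((jemb b : Fin n) : ℕ) = m + (b : ℕ) := fun b => rfl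
  set fam : Fin m × Fin k → (EE n →L[ℝ] EE n) := fun p => Dc n (emb p.1) (jemb p.2) with hfam
  -- each perturbation is a minimal projection
  have hQproj : ∀ p : Fin m × Fin k, IsProjOnto Y (P0 n m + fam p) := by
    intro p
    constructor
    · intro x
      rw [memY]
      intro l hl
      have h1 : (P0 n m + fam p) x l = P0 n m x l + Dc n (emb p.1) (jemb p.2) x l := rfl
      have hne : l ≠ jemb p.2 := Fin.ne_of_val_ne (by rw [hjembv]; omega)
      rw [h1, P0_apply, if_pos hl, Dc_apply, if_neg hne, add_zero]
    · intro y hy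
      have hz : y (emb p.1) = 0 := (memY y).1 hy _ (by rw [hembv]; exact p.1.2)
      ext l
      have h1 : (P0 n m + fam p) y l = P0 n m y l + Dc n (emb p.1) (jemb p.2) y l := rfl
      rw [h1, Dc_apply, hP0proj.2 y hy]
      split <;> simp [hz]
  have hQmin : ∀ p : Fin m × Fin k, (P0 n m + fam p) ∈ MinProjSet Y := by
    intro p
    refine ⟨hQproj p, ?_⟩
    rw [hrel]
    refine le_antisymm ((P0 n m + fam p).opNorm_le_bound zero_le_one fun x => ?_)
      (norm_ge _ (hQproj p))
    rw [one_mul]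
    exact norm_P0_add_Dc_apply_le (by rw [hembv]; exact p.1.2) (by rw [hjembv]; omega) x
  have hP0min : P0 n m ∈ MinProjSet Y := ⟨hP0proj, by rw [hrel]; exact hP0norm⟩
  -- representation: maps vanishing appropriately lie in the span of fam
  have hrep : ∀ T : EE n →L[ℝ] EE n, (∀ (x : EE n) (l : Fin n), (l : ℕ) < m → T x l = 0) →
      (∀ j : Fin n, m ≤ (j : ℕ) → T (sing n j) = 0) →
      T ∈ Submodule.span ℝ (Set.range fam) := by
    intro T h1 h2
    have hTeq : T = ∑ p : Fin m × Fin k, T (sing n (emb p.1)) (jemb p.2) • fam p := by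
      apply eq_on_basis
      intro l
      rw [ContinuousLinearMap.sum_apply]
      ext c
      rw [WithLp.ofLp_sum, Finset.sum_apply]
      have hterm : ∀ p : Fin m × Fin k,
          (T (sing n (emb p.1)) (jemb p.2) • fam p) (sing n l) c =
          T (sing n (emb p.1)) (jemb p.2) *
            (if c = jemb p.2 then (if emb p.1 = l then 1 else 0) else 0) := by
        intro p
        have : (T (sing n (emb p.1)) (jemb p.2) • fam p) (sing n l) c =
            T (sing n (emb p.1)) (jemb p.2) * (fam p (sing n l) c) := rfl
        rw [this, hfam, Dc_apply, sing_apply]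
      simp only [hterm]
      by_cases hl : (l : ℕ) < m
      · by_cases hc : (c : ℕ) < m
        · rw [h1 _ c hc]
          symm
          apply Finset.sum_eq_zero
          intro p _
          have hne : c ≠ jemb p.2 := Fin.ne_of_val_ne (by rw [hjembv]; omega)
          rw [if_neg hne, mul_zero]
        · push_neg at hc
          set p0 : Fin m × Fin k := (⟨(l : ℕ), hl⟩, ⟨(c : ℕ) - m, by omega⟩) with hp0
          rw [Finset.sum_eq_single p0]
          · have he1 : emb p0.1 = l := Fin.ext (by rw [hembv])
            have he2 : jemb p0.2 = c := Fin.ext (by rw [hjembv]; simp [hp0]; omega)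
            rw [if_pos he2.symm, if_pos he1, mul_one, he1, he2]
          · intro p _ hpne
            by_cases hb : p.2 = p0.2
            · have ha : p.1 ≠ p0.1 := fun h => hpne (Prod.ext h hb)
              have : emb p.1 ≠ l := fun h => ha (Fin.ext (by
                rw [← hembv p.1, h]))
              rw [if_neg this]
              split <;> simp
            · have : c ≠ jemb p.2 := fun h => hb (Fin.ext (by
                have := congrArg Fin.val h
                rw [hjembv] at this
                simp [hp0]
                omega))
              rw [if_neg this, mul_zero]
          · intro h
            exact absurd (Finset.mem_univ p0) h
      · push_neg at hl
        rw [h2 l hl]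
        have h0 : (0 : EE n) c = 0 := rfl
        rw [h0]
        symm
        apply Finset.sum_eq_zero
        intro p _
        have hne : emb p.1 ≠ l := Fin.ne_of_val_ne (by rw [hembv]; have := p.1.2; omega)
        rw [if_neg hne]
        split <;> simp
    rw [hTeq]
    exact Submodule.sum_mem _ fun p _ =>
      Submodule.smul_mem _ _ (Submodule.subset_span ⟨p, rfl⟩)
  -- direction of the affine span
  have hdir : (affineSpan ℝ (MinProjSet Y)).direction = Submodule.span ℝ (Set.range fam) := by
    rw [direction_affineSpan]
    apply le_antisymm
    · rw [vectorSpan_def, Submodule.span_le]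
      rintro d ⟨P, hP, Q, hQ, rfl⟩
      show P - Q ∈ Submodule.span ℝ (Set.range fam)
      apply hrep
      · intro x l hl
        have hs : (P - Q) x l = P x l - Q x l := rfl
        rw [hs, (memY _).1 (hP.1.1 x) l hl, (memY _).1 (hQ.1.1 x) l hl, sub_zero]
      · intro j hj
        have hjY : sing n j ∈ Y := by
          rw [memY]
          intro l hl
          have : l ≠ j := Fin.ne_of_val_ne (by omega)
          simp [sing_apply, this]
        have hs : (P - Q) (sing n j) = P (sing n j) - Q (sing n j) := rfl
        rw [hs, hP.1.2 _ hjY, hQ.1.2 _ hjY, sub_self]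
    · rw [vectorSpan_def]
      refine Submodule.span_le.2 ?_
      rintro _ ⟨p, rfl⟩
      have : fam p = (P0 n m + fam p) -ᵥ P0 n m :=
        (add_sub_cancel_left (P0 n m) (fam p)).symm
      rw [this]
      exact Submodule.subset_span (Set.vsub_mem_vsub (hQmin p) hP0min)
  -- linear independence
  have hli : LinearIndependent ℝ fam := by
    rw [Fintype.linearIndependent_iff]
    intro g hg p
    have h0 : (∑ q : Fin m × Fin k, g q • fam q) (sing n (emb p.1)) (jemb p.2) = 0 := by
      rw [hg]; rfl
    rw [ContinuousLinearMap.sum_apply, WithLp.ofLp_sum, Finset.sum_apply] at h0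
    have hterm : ∀ q : Fin m × Fin k,
        (g q • fam q) (sing n (emb p.1)) (jemb p.2) =
        g q * (if jemb p.2 = jemb q.2 then (if emb q.1 = emb p.1 then 1 else 0) else 0) := by
      intro q
      have : (g q • fam q) (sing n (emb p.1)) (jemb p.2) =
          g q * (fam q (sing n (emb p.1)) (jemb p.2)) := rfl
      rw [this, hfam, Dc_apply, sing_apply]
    rw [Finset.sum_congr rfl (fun q _ => hterm q), Finset.sum_eq_single p] at h0
    · simpa using h0
    · intro q _ hqne
      by_cases hb : q.2 = p.2
      · have ha : q.1 ≠ p.1 := fun h => hqne (Prod.ext h hb)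
        have : emb q.1 ≠ emb p.1 := fun h => ha (Fin.ext (by
          rw [← hembv q.1, h]; rfl))
        rw [if_neg this]
        split <;> simp
      · have : jemb p.2 ≠ jemb q.2 := fun h => hb (Fin.ext (by
          have := congrArg Fin.val h
          rw [hjembv, hjembv] at this
          omega))
        rw [if_neg this, mul_zero]
    · intro h
      exact absurd (Finset.mem_univ p) h
  -- conclude
  unfold adim
  rw [hdir, finrank_span_eq_card hli]
  simp [Fintype.card_prod, mul_comm]
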